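/- Let f be superquadratic on [0,∞) with subgradient function C. Let x₁,...,xₙ ≥ 0, a₁,...,aₙ ≥ 0 with Aₙ = ∑aᵢ > 0, x̄ = (1/Aₙ)∑aᵢxᵢ. Then (1/Aₙ)∑ aᵢ f(xᵢ) - f(x̄) ≤ (1/Aₙ)∑ aᵢ C(xᵢ)(xᵢ - x̄) - (1/Aₙ)∑ aᵢ f(|x̄ - xᵢ|). -/
import Mathlib


/-- converse Jensen-type inequality for superquadratic functions. -/
theorem stmt13 (f C : ℝ → ℝ)
    (hsq : ∀ x, 0 ≤ x → ∀ y, 0 ≤ y → f x + C x * (y - x) + f |y - x| ≤ f y)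
    (n : ℕ) (hn : 0 < n) (w x : ℕ → ℝ) (A xbar : ℝ)
    (hA : A = ∑ i ∈ Finset.range n, w i) (hApos : 0 < A)
    (hw : ∀ i < n, 0 ≤ w i)
    (hx : ∀ i < n, 0 ≤ x i)
    (hxbar : xbar = (1 / A) * ∑ i ∈ Finset.range n, w i * x i) :
    (1 / A) * ∑ i ∈ Finset.range n, w i * f (x i) - f xbar ≤
      (1 / A) * ∑ i ∈ Finset.range n, w i * (C (x i) * (x i - xbar)) -
        (1 / A) * ∑ i ∈ Finset.range n, w i * f |xbar - x i| := by
  have hxb : 0 ≤ xbar := by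
    rw [hxbar]
    apply mul_nonneg (by positivity)
    exact Finset.sum_nonneg fun i hi => mul_nonneg (hw i (Finset.mem_range.mp hi))
      (hx i (Finset.mem_range.mp hi))
  have key : ∑ i ∈ Finset.range n,
      w i * (f (x i) + C (x i) * (xbar - x i) + f |xbar - x i|) ≤
      ∑ i ∈ Finset.range n, w i * f xbar := by
    apply Finset.sum_le_sum
    intro i hi
    have hi' := Finset.mem_range.mp hi
    exact mul_le_mul_of_nonneg_left (hsq (x i) (hx i hi') xbar hxb) (hw i hi')
  rw [← Finset.sum_mul, ← hA] at key
  have hexp : ∑ i ∈ Finset.range n,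
      w i * (f (x i) + C (x i) * (xbar - x i) + f |xbar - x i|) =
      ∑ i ∈ Finset.range n, w i * f (x i)
      - ∑ i ∈ Finset.range n, w i * (C (x i) * (x i - xbar))
      + ∑ i ∈ Finset.range n, w i * f |xbar - x i| := by
    rw [← Finset.sum_sub_distrib, ← Finset.sum_add_distrib]
    apply Finset.sum_congr rfl
    intro i _
    ring
  rw [hexp] at key
  have hAinv : 0 < 1 / A := by positivity
  have key2 := mul_le_mul_of_nonneg_left key hAinv.le
  rw [mul_add, mul_sub, ← mul_assoc, one_div_mul_cancel hApos.ne', one_mul] at key2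
  linarith
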